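/- For any real numbers 0 < r < s and independent real-valued random variables A and B, the concentration function satisfies Q_r(A+B) ≤ P(|A| ≥ s) + 3·Q_r(A)·Q_s(B), where Q_r(X) = sup_{x ∈ ℝ} P(x < X ≤ x+r). -/
import Mathlib

open MeasureTheory ProbabilityTheory Filter ENNReal

/-- The Lévy concentration function `Q_r(X) = sup_x P(x < X ≤ x + r)`. -/
noncomputable def Qc {Ω : Type*} [MeasurableSpace Ω] (μ : Measure Ω) (X : Ω → ℝ) (r : ℝ) : ℝ≥0∞ :=
  ⨆ x : ℝ, μ {ω | x < X ω ∧ X ω ≤ x + r}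

theorem stmt0 {Ω : Type*} [MeasurableSpace Ω] (μ : Measure Ω) [IsProbabilityMeasure μ]
    (A B : Ω → ℝ) (hA : Measurable A) (hB : Measurable B) (hAB : IndepFun A B μ)
    (r s : ℝ) (hr : 0 < r) (hrs : r < s) :
    Qc μ (fun ω => A ω + B ω) r ≤ μ {ω | s ≤ |A ω|} + 3 * Qc μ A r * Qc μ B s := by
  set μA := μ.map A with hμAdef
  set μB := μ.map B with hμBdef
  have hQA : ∀ y : ℝ, μA (Set.Ioc y (y + r)) ≤ Qc μ A r := by
    intro y
    rw [hμAdef, Measure.map_apply hA measurableSet_Ioc]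
    refine le_iSup_of_le y (le_of_eq ?_)
    congr 1
  have hQB : ∀ y : ℝ, μB (Set.Ioc y (y + s)) ≤ Qc μ B s := by
    intro y
    rw [hμBdef, Measure.map_apply hB measurableSet_Ioc]
    refine le_iSup_of_le y (le_of_eq ?_)
    congr 1
  refine iSup_le fun x => ?_
  set J : Set ℝ := Set.Ioc (x - s) (x + r + s) with hJdef
  have hJm : MeasurableSet J := measurableSet_Ioc
  set S : Set (ℝ × ℝ) := {p | (x < p.1 + p.2 ∧ p.1 + p.2 ≤ x + r) ∧ p.2 ∈ J} with hSdef
  have hSm : MeasurableSet S := by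
    apply MeasurableSet.inter
    · exact MeasurableSet.inter
        (measurableSet_lt measurable_const (measurable_fst.add measurable_snd))
        (measurableSet_le (measurable_fst.add measurable_snd) measurable_const)
    · exact measurable_snd hJm
  -- Step 1: split the event
  have hsplit : μ {ω | x < A ω + B ω ∧ A ω + B ω ≤ x + r} ≤
      μ {ω | s ≤ |A ω|} + μ ((fun ω => (A ω, B ω)) ⁻¹' S) := by
    refine le_trans (measure_mono ?_) (measure_union_le _ _)
    intro ω hω
    by_cases h : s ≤ |A ω|
    · exact Or.inl h
    · right
      have h' := abs_lt.mp (not_le.mp h)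
      simp only [hSdef, hJdef, Set.mem_preimage, Set.mem_setOf_eq, Set.mem_Ioc]
      obtain ⟨h1, h2⟩ := hω
      exact ⟨⟨h1, h2⟩, by linarith [h'.1, h'.2], by linarith [h'.1, h'.2]⟩
  -- Step 2: the independence bound
  have hmap : μ.map (fun ω => (A ω, B ω)) = μA.prod μB :=
    (indepFun_iff_map_prod_eq_prod_map_map hA.aemeasurable hB.aemeasurable).mp hAB
  have hkey : μ ((fun ω => (A ω, B ω)) ⁻¹' S) ≤ Qc μ A r * μB J := by
    rw [← Measure.map_apply (hA.prodMk hB) hSm, hmap, Measure.prod_apply_symm hSm]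
    have hbound : ∀ b : ℝ, μA ((fun a => (a, b)) ⁻¹' S) ≤
        J.indicator (fun _ => Qc μ A r) b := by
      intro b
      by_cases hb : b ∈ J
      · rw [Set.indicator_of_mem hb]
        refine le_trans (measure_mono ?_) (hQA (x - b))
        intro a ha
        simp only [hSdef, Set.mem_preimage, Set.mem_setOf_eq] at ha
        simp only [Set.mem_Ioc]
        constructor <;> linarith [ha.1.1, ha.1.2]
      · rw [Set.indicator_of_notMem hb]
        have : ((fun a => (a, b)) ⁻¹' S) = ∅ := by
          ext a; simp only [hSdef, Set.mem_preimage, Set.mem_setOf_eq, Set.mem_empty_iff_false,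
            iff_false]
          exact fun h => hb h.2
        simp [this]
    calc ∫⁻ b, μA ((fun a => (a, b)) ⁻¹' S) ∂μB
        ≤ ∫⁻ b, J.indicator (fun _ => Qc μ A r) b ∂μB := lintegral_mono hbound
      _ = Qc μ A r * μB J := lintegral_indicator_const hJm _
  -- Step 3: μB J ≤ 3 * Qc μ B s
  have hJ3 : μB J ≤ 3 * Qc μ B s := by
    have hsub : J ⊆ Set.Ioc (x - s) (x - s + s) ∪ Set.Ioc x (x + s) ∪
        Set.Ioc (x + s) (x + s + s) := by
      intro b hb
      simp only [hJdef, Set.mem_Ioc] at hb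
      simp only [Set.mem_union, Set.mem_Ioc]
      rcases le_or_gt b (x - s + s) with h1 | h1
      · exact Or.inl (Or.inl ⟨hb.1, h1⟩)
      · rcases le_or_gt b (x + s) with h2 | h2
        · exact Or.inl (Or.inr ⟨by linarith, h2⟩)
        · exact Or.inr ⟨h2, by linarith [hb.2]⟩
    calc μB J ≤ μB (Set.Ioc (x - s) (x - s + s) ∪ Set.Ioc x (x + s) ∪
        Set.Ioc (x + s) (x + s + s)) := measure_mono hsub
      _ ≤ μB (Set.Ioc (x - s) (x - s + s) ∪ Set.Ioc x (x + s)) +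
          μB (Set.Ioc (x + s) (x + s + s)) := measure_union_le _ _
      _ ≤ μB (Set.Ioc (x - s) (x - s + s)) + μB (Set.Ioc x (x + s)) +
          μB (Set.Ioc (x + s) (x + s + s)) := by
            gcongr; exact measure_union_le _ _
      _ ≤ Qc μ B s + Qc μ B s + Qc μ B s := by
            gcongr <;> [exact hQB _; exact hQB _; exact hQB _]
      _ = 3 * Qc μ B s := by ring
  calc μ {ω | x < A ω + B ω ∧ A ω + B ω ≤ x + r}
      ≤ μ {ω | s ≤ |A ω|} + μ ((fun ω => (A ω, B ω)) ⁻¹' S) := hsplit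
    _ ≤ μ {ω | s ≤ |A ω|} + Qc μ A r * (3 * Qc μ B s) := by
        gcongr
        exact le_trans hkey (by gcongr)
    _ = μ {ω | s ≤ |A ω|} + 3 * Qc μ A r * Qc μ B s := by ring
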